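/- arXiv:1207.0473 — 3 statements merged into one kernel-verified Lean document; each statement's English description precedes it below -/
import Mathlib

section
/- Consider the separable nonlinear regression model y_i = β₀ᵀ h(x_i, α₀) + e_i, i = 1,2,..., where (x_i, e_i) are i.i.d., x_i ∈ ℝ^q is independent of e_i ∈ ℝ, α₀ ∈ A ⊂ ℝ^{p₁}, β₀ ∈ B ⊂ ℝ^{p₂}, and h: ℝ^q × A → ℝ^{p₂} is jointly measurable. Let ρ be a ρ-function and let (α̂_n, β̂_n) ∈ A × B be any sequence of measurable minimizers of λ_n(α, β) = (1/n) Σ_{i=1}^n ρ(y_i − βᵀ h(x_i, α)) over A × B. Assume A is compact, and assume: (A) B is closed and tβ ∈ B for all β ∈ B, t > 0; (B) sup_{α ∈ A} E|ρ(y − βᵀh(x,α))| < ∞ for all β ∈ B; (C) t ↦ E ρ(e − t) has a unique minimum at t = 0, with minimum value λ₀ = Eρ(e); (D) h is continuous in α almost surely and for every α ≠ α₀, sup_{β ∈ B} P{βᵀh(x,α) = β₀ᵀh(x,α₀)} < 1; (E) δ := sup_{β ≠ 0, α ∈ A} P(βᵀh(x,α) = 0) < 1 − λ₀/S where S = sup_t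 ρ(t) (possibly infinite, in which case the condition reads δ < 1). Then there exists a finite constant T₀ such that, with probability one, ‖β̂_n‖ ≤ T₀ for all sufficiently large n. -/
open MeasureTheory ProbabilityTheory Filter
open scoped RealInnerProductSpace ENNReal

/-- A ρ-function in the sense of Maronna et al. (2006): `ρ(u)` is a continuous
nondecreasing function of `|u|` with `ρ(0) = 0`, such that if
`ρ(u) < sup_v ρ(v)` and `0 ≤ u < v` then `ρ(u) < ρ(v)`. -/
def IsRhoFunction (ρ : ℝ → ℝ) : Prop :=
  Continuous ρ ∧ (∀ u, 0 ≤ ρ u) ∧ (∀ u, ρ (-u) = ρ u) ∧ ρ 0 = 0 ∧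
    MonotoneOn ρ (Set.Ici 0) ∧
    ∀ u v : ℝ, 0 ≤ u → u < v → (∃ w, ρ u < ρ w) → ρ u < ρ v

set_option maxHeartbeats 1000000

namespace MEstAux
noncomputable section
variable {q p₁ p₂ : ℕ}

def fA (ρ : ℝ → ℝ) (M : ℝ)
    (h : EuclideanSpace ℝ (Fin q) → EuclideanSpace ℝ (Fin p₁) → EuclideanSpace ℝ (Fin p₂))
    (β₀ : EuclideanSpace ℝ (Fin p₂)) (α₀ : EuclideanSpace ℝ (Fin p₁)) (k : ℕ)
    (z : EuclideanSpace ℝ (Fin p₂) × EuclideanSpace ℝ (Fin p₁))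
    (a : EuclideanSpace ℝ (Fin q) × ℝ) : ℝ :=
  min (ρ (max ((k : ℝ) * |⟪z.1, h a.1 z.2⟫| - |⟪β₀, h a.1 α₀⟫ + a.2|) 0)) M

def GA (ρ : ℝ → ℝ) (M : ℝ)
    (h : EuclideanSpace ℝ (Fin q) → EuclideanSpace ℝ (Fin p₁) → EuclideanSpace ℝ (Fin p₂))
    (β₀ : EuclideanSpace ℝ (Fin p₂)) (α₀ : EuclideanSpace ℝ (Fin p₁))
    (d : ℕ → EuclideanSpace ℝ (Fin p₂) × EuclideanSpace ℝ (Fin p₁)) (k : ℕ)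
    (z : EuclideanSpace ℝ (Fin p₂) × EuclideanSpace ℝ (Fin p₁))
    (a : EuclideanSpace ℝ (Fin q) × ℝ) : ℝ :=
  ⨅ j : ℕ, if dist (d j) z ≤ (k : ℝ)⁻¹ then fA ρ M h β₀ α₀ k (d j) a else M

variable {ρ : ℝ → ℝ} {M : ℝ}
  {h : EuclideanSpace ℝ (Fin q) → EuclideanSpace ℝ (Fin p₁) → EuclideanSpace ℝ (Fin p₂)}
  {β₀ : EuclideanSpace ℝ (Fin p₂)} {α₀ : EuclideanSpace ℝ (Fin p₁)}
  {d : ℕ → EuclideanSpace ℝ (Fin p₂) × EuclideanSpace ℝ (Fin p₁)}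

theorem fA_nonneg' (hρ : ∀ u, 0 ≤ ρ u) (hM : 0 ≤ M) (k : ℕ)
    (z : EuclideanSpace ℝ (Fin p₂) × EuclideanSpace ℝ (Fin p₁))
    (a : EuclideanSpace ℝ (Fin q) × ℝ) :
    0 ≤ fA ρ M h β₀ α₀ k z a := le_min (hρ _) hM

theorem GA_bddBelow' (hρ : ∀ u, 0 ≤ ρ u) (hM : 0 ≤ M) (k : ℕ)
    (z : EuclideanSpace ℝ (Fin p₂) × EuclideanSpace ℝ (Fin p₁))
    (a : EuclideanSpace ℝ (Fin q) × ℝ) :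
    BddBelow (Set.range fun j : ℕ =>
      if dist (d j) z ≤ (k : ℝ)⁻¹ then fA ρ M h β₀ α₀ k (d j) a else M) := by
  refine ⟨0, ?_⟩
  rintro r ⟨j, rfl⟩
  dsimp only
  split_ifs
  · exact fA_nonneg' hρ hM _ _ _
  · exact hM

/-- continuity of `fA` in the parameter, within `C`. -/
theorem fA_continuousOn (hρc : Continuous ρ)
    {A : Set (EuclideanSpace ℝ (Fin p₁))}
    {C : Set (EuclideanSpace ℝ (Fin p₂) × EuclideanSpace ℝ (Fin p₁))}
    (hC : ∀ w ∈ C, w.2 ∈ A)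
    {xv : EuclideanSpace ℝ (Fin q)} (hcont : ContinuousOn (h xv) A) (k : ℕ) (ev : ℝ) :
    ContinuousOn (fun w => fA ρ M h β₀ α₀ k w (xv, ev)) C := by
  have hc2 : ContinuousOn (fun w : EuclideanSpace ℝ (Fin p₂) × EuclideanSpace ℝ (Fin p₁) =>
      h xv w.2) C := hcont.comp continuous_snd.continuousOn fun w hw => hC w hw
  have hinner : ContinuousOn (fun w : EuclideanSpace ℝ (Fin p₂) × EuclideanSpace ℝ (Fin p₁) =>
      ⟪w.1, h xv w.2⟫) C := ContinuousOn.inner continuous_fst.continuousOn hc2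
  have houter : Continuous fun t : ℝ =>
      min (ρ (max ((k : ℝ) * |t| - |⟪β₀, h xv α₀⟫ + ev|) 0)) M := by
    apply Continuous.min _ continuous_const
    apply hρc.comp
    exact ((continuous_const.mul continuous_abs).sub continuous_const).max continuous_const
  exact houter.comp_continuousOn hinner

/-- `GA` at `z` is below `fA` at any point `p` of `C` within distance `< k⁻¹` of `z`. -/
theorem GA_le_fA (hρc : Continuous ρ) (hρ0 : ∀ u, 0 ≤ ρ u) (hM : 0 ≤ M)
    {A : Set (EuclideanSpace ℝ (Fin p₁))}
    {C : Set (EuclideanSpace ℝ (Fin p₂) × EuclideanSpace ℝ (Fin p₁))}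
    (hC : ∀ w ∈ C, w.2 ∈ A)
    (hdmem : ∀ j, d j ∈ C) (hdense : ∀ p ∈ C, ∀ r > 0, ∃ j, dist (d j) p < r)
    {xv : EuclideanSpace ℝ (Fin q)} (hcont : ContinuousOn (h xv) A)
    (k : ℕ) {z p : EuclideanSpace ℝ (Fin p₂) × EuclideanSpace ℝ (Fin p₁)}
    (hp : p ∈ C) (hdist : dist p z < (k : ℝ)⁻¹) (ev : ℝ) :
    GA ρ M h β₀ α₀ d k z (xv, ev) ≤ fA ρ M h β₀ α₀ k p (xv, ev) := by
  refine le_of_forall_pos_le_add fun ε hε => ?_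
  have hφ := (fA_continuousOn (M := M) (β₀ := β₀) (α₀ := α₀) hρc hC hcont k ev) p hp
  have hnb : {w | fA ρ M h β₀ α₀ k w (xv, ev) < fA ρ M h β₀ α₀ k p (xv, ev) + ε} ∈
      nhdsWithin p C := by
    have := hφ (Iio_mem_nhds (show fA ρ M h β₀ α₀ k p (xv, ev) <
      fA ρ M h β₀ α₀ k p (xv, ev) + ε by linarith))
    rwa [Filter.mem_map] at this
  rw [Metric.mem_nhdsWithin_iff] at hnb
  obtain ⟨r, hr, hsub⟩ := hnb
  have hr' : 0 < min r ((k : ℝ)⁻¹ - dist p z) := lt_min hr (by linarith)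
  obtain ⟨j, hj⟩ := hdense p hp _ hr'
  have hjball : d j ∈ Metric.ball p r ∩ C :=
    ⟨by rw [Metric.mem_ball]; exact lt_of_lt_of_le hj (min_le_left _ _), hdmem j⟩
  have hjz : dist (d j) z ≤ (k : ℝ)⁻¹ := by
    have := dist_triangle (d j) p z
    have h2 : dist (d j) p < (k : ℝ)⁻¹ - dist p z := lt_of_lt_of_le hj (min_le_right _ _)
    linarith
  calc GA ρ M h β₀ α₀ d k z (xv, ev) ≤ _ := ciInf_le (GA_bddBelow' hρ0 hM k z (xv, ev)) j
    _ ≤ fA ρ M h β₀ α₀ k p (xv, ev) + ε := by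
        rw [if_pos hjz]
        exact le_of_lt (hsub hjball)

/-- `fA` at the normalized direction bounds the actual loss term. -/
theorem fA_le_rho (heven : ∀ u, ρ (-u) = ρ u) (hmono : MonotoneOn ρ (Set.Ici 0))
    (k : ℕ) {β : EuclideanSpace ℝ (Fin p₂)} (α : EuclideanSpace ℝ (Fin p₁))
    (hβ : β ≠ 0) (hk : (k : ℝ) ≤ ‖β‖) (xv : EuclideanSpace ℝ (Fin q)) (ev : ℝ) :
    fA ρ M h β₀ α₀ k (‖β‖⁻¹ • β, α) (xv, ev) ≤ ρ (⟪β₀, h xv α₀⟫ + ev - ⟪β, h xv α⟫) := by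
  have hβn : (0 : ℝ) < ‖β‖ := norm_pos_iff.2 hβ
  set w : ℝ := ⟪‖β‖⁻¹ • β, h xv α⟫ with hw
  set yv : ℝ := ⟪β₀, h xv α₀⟫ + ev with hyv
  have hsmul : ⟪β, h xv α⟫ = ‖β‖ * w := by
    rw [hw, real_inner_smul_left]
    field_simp
  have habs : ∀ t : ℝ, ρ t = ρ |t| := by
    intro t
    rcases abs_cases t with ⟨ht, _⟩ | ⟨ht, _⟩
    · rw [ht]
    · rw [ht, heven]
  have key : max ((k : ℝ) * |w| - |yv|) 0 ≤ |yv - ‖β‖ * w| := by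
    refine max_le ?_ (abs_nonneg _)
    have h1 : |‖β‖ * w| - |yv| ≤ |‖β‖ * w - yv| := abs_sub_abs_le_abs_sub _ _
    have h2 : |‖β‖ * w - yv| = |yv - ‖β‖ * w| := abs_sub_comm _ _
    have h3 : (k : ℝ) * |w| ≤ ‖β‖ * |w| := by
      apply mul_le_mul_of_nonneg_right hk (abs_nonneg w)
    have h4 : |‖β‖ * w| = ‖β‖ * |w| := by
      rw [abs_mul, abs_of_pos hβn]
    linarith
  calc fA ρ M h β₀ α₀ k (‖β‖⁻¹ • β, α) (xv, ev) ≤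
      ρ (max ((k : ℝ) * |w| - |yv|) 0) := min_le_left _ _
    _ ≤ ρ (|yv - ‖β‖ * w|) := hmono (Set.mem_Ici.2 (le_max_right _ _))
        (Set.mem_Ici.2 (abs_nonneg _)) key
    _ = ρ (yv - ‖β‖ * w) := (habs _).symm
    _ = ρ (⟪β₀, h xv α₀⟫ + ev - ⟪β, h xv α⟫) := by rw [hsmul, hyv]

/-- as `k → ∞`, `GA k z` is eventually `≥ M - ε` whenever `⟪z.1, h xv z.2⟫ ≠ 0`. -/
theorem GA_eventually_ge (hρ0 : ∀ u, 0 ≤ ρ u) (hM : 0 ≤ M)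
    (hρM : ∀ ε > (0:ℝ), ∃ r₀ ≥ (0:ℝ), ∀ r ≥ r₀, M - ε ≤ min (ρ r) M)
    {A : Set (EuclideanSpace ℝ (Fin p₁))}
    {C : Set (EuclideanSpace ℝ (Fin p₂) × EuclideanSpace ℝ (Fin p₁))}
    (hC : ∀ w ∈ C, w.2 ∈ A) (hdmem : ∀ j, d j ∈ C)
    {xv : EuclideanSpace ℝ (Fin q)} (hcont : ContinuousOn (h xv) A)
    {z : EuclideanSpace ℝ (Fin p₂) × EuclideanSpace ℝ (Fin p₁)} (hz : z ∈ C)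
    (hw : ⟪z.1, h xv z.2⟫ ≠ 0) (ev : ℝ) {ε : ℝ} (hε : 0 < ε) :
    ∀ᶠ k : ℕ in atTop, M - ε ≤ GA ρ M h β₀ α₀ d k z (xv, ev) := by
  set ψ : EuclideanSpace ℝ (Fin p₂) × EuclideanSpace ℝ (Fin p₁) → ℝ :=
    fun w' => ⟪w'.1, h xv w'.2⟫ with hψ
  have hψc : ContinuousOn ψ C := ContinuousOn.inner continuous_fst.continuousOn
    (hcont.comp continuous_snd.continuousOn fun w hw => hC w hw)
  set c : ℝ := |ψ z| / 2 with hc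
  have hc0 : 0 < c := by
    have : 0 < |ψ z| := abs_pos.2 hw
    positivity
  have hnb : {w' | c < |ψ w'|} ∈ nhdsWithin z C := by
    have habs : Tendsto (fun w' => |ψ w'|) (nhdsWithin z C) (nhds |ψ z|) :=
      (continuous_abs.tendsto (ψ z)).comp (hψc z hz)
    have := habs (Ioi_mem_nhds (show c < |ψ z| by rw [hc]; linarith [abs_pos.2 hw]))
    rwa [Filter.mem_map] at this
  rw [Metric.mem_nhdsWithin_iff] at hnb
  obtain ⟨r, hr, hsub⟩ := hnb
  obtain ⟨r₀, hr₀, hρMspec⟩ := hρM ε hε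
  set yv : ℝ := ⟪β₀, h xv α₀⟫ + ev with hyv
  have h1 : ∀ᶠ k : ℕ in atTop, (k : ℝ)⁻¹ < r := by
    have : Tendsto (fun k : ℕ => (k : ℝ)⁻¹) atTop (nhds 0) :=
      tendsto_inv_atTop_zero.comp tendsto_natCast_atTop_atTop
    exact this.eventually_lt_const hr
  have h2 : ∀ᶠ k : ℕ in atTop, r₀ + |yv| ≤ (k : ℝ) * c := by
    have : Tendsto (fun k : ℕ => (k : ℝ) * c) atTop atTop :=
      Tendsto.atTop_mul_const hc0 tendsto_natCast_atTop_atTop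
    exact this.eventually_ge_atTop _
  filter_upwards [h1, h2] with k hk1 hk2
  refine le_ciInf fun j => ?_
  split_ifs with hj
  · have hjin : d j ∈ Metric.ball z r ∩ C :=
      ⟨by rw [Metric.mem_ball]; exact lt_of_le_of_lt hj hk1, hdmem j⟩
    have hcj : c < |ψ (d j)| := hsub hjin
    have harg : r₀ ≤ max ((k : ℝ) * |ψ (d j)| - |yv|) 0 := by
      have : (k : ℝ) * c ≤ (k : ℝ) * |ψ (d j)| :=
        mul_le_mul_of_nonneg_left (le_of_lt hcj) (Nat.cast_nonneg k)
      have : r₀ ≤ (k : ℝ) * |ψ (d j)| - |yv| := by linarith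
      exact le_max_of_le_left this
    exact hρMspec _ harg
  · linarith

theorem GA_nonneg (hρ : ∀ u, 0 ≤ ρ u) (hM : 0 ≤ M) (k : ℕ)
    (z : EuclideanSpace ℝ (Fin p₂) × EuclideanSpace ℝ (Fin p₁))
    (a : EuclideanSpace ℝ (Fin q) × ℝ) :
    0 ≤ GA ρ M h β₀ α₀ d k z a := by
  refine le_ciInf fun j => ?_
  split_ifs
  · exact fA_nonneg' hρ hM _ _ _
  · exact hM

theorem GA_le (hρ : ∀ u, 0 ≤ ρ u) (hM : 0 ≤ M) (k : ℕ)
    (z : EuclideanSpace ℝ (Fin p₂) × EuclideanSpace ℝ (Fin p₁))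
    (a : EuclideanSpace ℝ (Fin q) × ℝ) :
    GA ρ M h β₀ α₀ d k z a ≤ M := by
  refine le_trans (ciInf_le (GA_bddBelow' hρ hM k z a) 0) ?_
  split_ifs
  · exact min_le_right _ _
  · exact le_rfl

theorem fA_measurable (hρ : Continuous ρ) (hh : Measurable (Function.uncurry h)) (k : ℕ)
    (z : EuclideanSpace ℝ (Fin p₂) × EuclideanSpace ℝ (Fin p₁)) :
    Measurable (fA ρ M h β₀ α₀ k z) := by
  have h1 : Measurable fun a : EuclideanSpace ℝ (Fin q) × ℝ => h a.1 z.2 :=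
    hh.comp (measurable_fst.prodMk measurable_const)
  have h2 : Measurable fun a : EuclideanSpace ℝ (Fin q) × ℝ => h a.1 α₀ :=
    hh.comp (measurable_fst.prodMk measurable_const)
  have hi1 : Measurable fun a : EuclideanSpace ℝ (Fin q) × ℝ => ⟪z.1, h a.1 z.2⟫ :=
    (Continuous.inner continuous_const continuous_id).measurable.comp h1
  have hi2 : Measurable fun a : EuclideanSpace ℝ (Fin q) × ℝ => ⟪β₀, h a.1 α₀⟫ :=
    (Continuous.inner continuous_const continuous_id).measurable.comp h2
  exact ((hρ.measurable.comp
    ((((measurable_const.mul hi1.abs).sub ((hi2.add measurable_snd).abs)).max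
      measurable_const))).min measurable_const)

theorem GA_measurable (hρ : Continuous ρ) (hh : Measurable (Function.uncurry h)) (k : ℕ)
    (z : EuclideanSpace ℝ (Fin p₂) × EuclideanSpace ℝ (Fin p₁)) :
    Measurable (GA ρ M h β₀ α₀ d k z) := by
  refine Measurable.iInf fun j => ?_
  split_ifs
  · exact fA_measurable hρ hh k _
  · exact measurable_const

end
end MEstAux

/-- **Lemma.** In the separable nonlinear regression model
`y_i = β₀ᵀ h(x_i, α₀) + e_i` with i.i.d. `(x_i, e_i)`, `x_i` independent of
`e_i`, with `A` compact and under assumptions (A)–(E), the norms `‖β̂_n‖` of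
the M-estimates are ultimately bounded with probability one. -/
theorem M_estimate_beta_ultimately_bounded
    {Ω : Type*} [MeasurableSpace Ω] (μ : Measure Ω) [IsProbabilityMeasure μ]
    (q p₁ p₂ : ℕ)
    (A : Set (EuclideanSpace ℝ (Fin p₁))) (B : Set (EuclideanSpace ℝ (Fin p₂)))
    (hAcompact : IsCompact A)
    (α₀ : EuclideanSpace ℝ (Fin p₁)) (β₀ : EuclideanSpace ℝ (Fin p₂))
    (hα₀ : α₀ ∈ A) (hβ₀ : β₀ ∈ B)
    (h : EuclideanSpace ℝ (Fin q) → EuclideanSpace ℝ (Fin p₁) →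
      EuclideanSpace ℝ (Fin p₂))
    (hh : Measurable (Function.uncurry h))
    -- the data: i.i.d. pairs `(x_i, e_i)` with `x_i` independent of `e_i`
    (x : ℕ → Ω → EuclideanSpace ℝ (Fin q)) (e : ℕ → Ω → ℝ)
    (hx : ∀ i, Measurable (x i)) (he : ∀ i, Measurable (e i))
    (hiid : iIndepFun (fun i ω => (x i ω, e i ω)) μ)
    (hident : ∀ i, IdentDistrib (fun ω => (x i ω, e i ω))
      (fun ω => (x 0 ω, e 0 ω)) μ μ)
    (hxe : ∀ i, IndepFun (x i) (e i) μ)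
    (y : ℕ → Ω → ℝ) (hy : ∀ i ω, y i ω = ⟪β₀, h (x i ω) α₀⟫ + e i ω)
    -- the loss function
    (ρ : ℝ → ℝ) (hρ : IsRhoFunction ρ)
    -- the M-estimates: measurable minimizers of the empirical loss on `A × B`
    (αhat : ℕ → Ω → EuclideanSpace ℝ (Fin p₁))
    (βhat : ℕ → Ω → EuclideanSpace ℝ (Fin p₂))
    (hαhatmeas : ∀ n, Measurable (αhat n))
    (hβhatmeas : ∀ n, Measurable (βhat n))
    (hαhatmem : ∀ n ω, αhat n ω ∈ A) (hβhatmem : ∀ n ω, βhat n ω ∈ B)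
    (hargmin : ∀ (n : ℕ) (ω : Ω), ∀ α ∈ A, ∀ β ∈ B,
      (1 / (n : ℝ)) * ∑ i ∈ Finset.range n,
          ρ (y i ω - ⟪βhat n ω, h (x i ω) (αhat n ω)⟫) ≤
        (1 / (n : ℝ)) * ∑ i ∈ Finset.range n, ρ (y i ω - ⟪β, h (x i ω) α⟫))
    -- (A): `B` is a closed cone
    (hBclosed : IsClosed B) (hBcone : ∀ β ∈ B, ∀ t : ℝ, 0 < t → t • β ∈ B)
    -- (B): `sup_{α∈A} E|ρ(y − βᵀh(x,α))| < ∞` for all `β ∈ B`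
    (hB : ∀ β ∈ B,
      (⨆ α ∈ A, ∫⁻ ω, ENNReal.ofReal (ρ (y 0 ω - ⟪β, h (x 0 ω) α⟫)) ∂μ) < ⊤)
    -- (C): `t ↦ Eρ(e − t)` has a unique minimum at `t = 0`
    (hC : ∀ t : ℝ, t ≠ 0 →
      ∫⁻ ω, ENNReal.ofReal (ρ (e 0 ω)) ∂μ <
        ∫⁻ ω, ENNReal.ofReal (ρ (e 0 ω - t)) ∂μ)
    -- (D): a.s. continuity in `α`, and identifiability
    (hDcont : ∀ᵐ ω ∂μ, ∀ i, ContinuousOn (fun a => h (x i ω) a) A)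
    (hDident : ∀ α ∈ A, α ≠ α₀ →
      (⨆ β ∈ B, μ {ω | ⟪β, h (x 0 ω) α⟫ = ⟪β₀, h (x 0 ω) α₀⟫}) < 1)
    -- (E): `δ < 1 − λ₀/S` (read in `ℝ≥0∞`, so that for `S = ∞` it is `δ < 1`)
    (hE : (⨆ (β : EuclideanSpace ℝ (Fin p₂)) (_ : β ≠ 0) (α ∈ A),
        μ {ω | ⟪β, h (x 0 ω) α⟫ = 0}) <
      1 - (∫⁻ ω, ENNReal.ofReal (ρ (e 0 ω)) ∂μ) /
        ⨆ t : ℝ, ENNReal.ofReal (ρ t)) :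
    ∃ T₀ : ℝ, ∀ᵐ ω ∂μ, ∀ᶠ n in atTop, ‖βhat n ω‖ ≤ T₀ := by
  classical
  obtain ⟨hρc, hρ0, hρeven, hρzero, hρmono, -⟩ := hρ
  -- Step 1 : integrability of `ρ ∘ e 0`
  have hmeas_ρe : ∀ i, Measurable fun ω => ρ (e i ω) := fun i => hρc.measurable.comp (he i)
  have hye : ∀ i ω, y i ω - ⟪β₀, h (x i ω) α₀⟫ = e i ω := fun i ω => by rw [hy i ω]; ring
  have hfin : ∫⁻ ω, ENNReal.ofReal (ρ (e 0 ω)) ∂μ < ⊤ := by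
    have h2 : (∫⁻ ω, ENNReal.ofReal (ρ (y 0 ω - ⟪β₀, h (x 0 ω) α₀⟫)) ∂μ) ≤
        ⨆ α ∈ A, ∫⁻ ω, ENNReal.ofReal (ρ (y 0 ω - ⟪β₀, h (x 0 ω) α⟫)) ∂μ :=
      le_iSup₂ (f := fun α _ => ∫⁻ ω, ENNReal.ofReal (ρ (y 0 ω - ⟪β₀, h (x 0 ω) α⟫)) ∂μ) α₀ hα₀
    simp only [hye 0] at h2
    exact lt_of_le_of_lt h2 (hB β₀ hβ₀)
  have hint_ρe : Integrable (fun ω => ρ (e 0 ω)) μ := by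
    refine ⟨(hmeas_ρe 0).aestronglyMeasurable, ?_⟩
    rw [hasFiniteIntegral_iff_ofReal (ae_of_all _ fun ω => hρ0 _)]
    exact hfin
  set lam0 : ℝ := ∫ ω, ρ (e 0 ω) ∂μ with hlam0def
  have hlam0_nonneg : 0 ≤ lam0 := integral_nonneg fun ω => hρ0 _
  have hlam0E : ∫⁻ ω, ENNReal.ofReal (ρ (e 0 ω)) ∂μ = ENNReal.ofReal lam0 :=
    (ofReal_integral_eq_lintegral_ofReal hint_ρe (ae_of_all _ fun ω => hρ0 _)).symm
  -- Step 2 : `S ≠ 0`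
  set S : ℝ≥0∞ := ⨆ t : ℝ, ENNReal.ofReal (ρ t) with hSdef
  have hS0 : S ≠ 0 := by
    intro hS
    have hρall : ∀ t : ℝ, ρ t = 0 := by
      intro t
      have h1 : ENNReal.ofReal (ρ t) ≤ S := le_iSup (fun t : ℝ => ENNReal.ofReal (ρ t)) t
      rw [hS] at h1
      have := le_antisymm h1 zero_le
      rw [ENNReal.ofReal_eq_zero] at this
      exact le_antisymm this (hρ0 t)
    have := hC 1 one_ne_zero
    simp [hρall] at this
  -- Step 3 : trivial case `B ⊆ {0}`
  by_cases hBtriv : ∀ β ∈ B, β = (0 : EuclideanSpace ℝ (Fin p₂))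
  · refine ⟨0, ae_of_all _ fun ω => Eventually.of_forall fun n => ?_⟩
    rw [hBtriv _ (hβhatmem n ω)]; simp
  push_neg at hBtriv
  obtain ⟨β1, hβ1B, hβ1⟩ := hBtriv
  -- Step 4 : the constant `M`
  set δE : ℝ≥0∞ := ⨆ (β : EuclideanSpace ℝ (Fin p₂)) (_ : β ≠ 0) (α ∈ A),
      μ {ω | ⟪β, h (x 0 ω) α⟫ = 0} with hδEdef
  have hδE_lt_one : δE < 1 := lt_of_lt_of_le hE tsub_le_self
  have hδE_ne_top : δE ≠ ⊤ := (lt_of_lt_of_le hδE_lt_one le_top).ne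
  set δ' : ℝ := δE.toReal with hδ'def
  have hδ'0 : 0 ≤ δ' := ENNReal.toReal_nonneg
  have hδ'1 : δ' < 1 := by
    have := ENNReal.toReal_lt_toReal hδE_ne_top ENNReal.one_ne_top |>.2 hδE_lt_one
    simpa using this
  obtain ⟨M, hM0, hMS, hMlam⟩ :
      ∃ M : ℝ, 0 < M ∧ ENNReal.ofReal M ≤ S ∧ lam0 < M * (1 - δ') := by
    by_cases hStop : S = ⊤
    · have h1 : 0 < 1 - δ' := by linarith
      refine ⟨lam0 / (1 - δ') + 1,
        by have := div_nonneg hlam0_nonneg h1.le; linarith,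
        by rw [hStop]; exact le_top, ?_⟩
      have : (lam0 / (1 - δ') + 1) * (1 - δ') = lam0 + (1 - δ') := by
        field_simp
      rw [this]
      linarith
    · -- `S` finite : take `M = S.toReal`
      rw [hlam0E] at hE
      have hLne : ENNReal.ofReal lam0 ≠ ⊤ := ENNReal.ofReal_ne_top
      have hLS_ne : ENNReal.ofReal lam0 / S ≠ ⊤ := by
        intro hdiv
        rcases ENNReal.div_eq_top.1 hdiv with ⟨-, hS⟩ | ⟨hL, -⟩
        exacts [hS0 hS, hLne hL]
      have hstep_b : ENNReal.ofReal lam0 / S < 1 - δE := by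
        have h1 : δE + ENNReal.ofReal lam0 / S < 1 :=
          (ENNReal.cancel_of_ne hLS_ne).lt_tsub_iff_right.1 hE
        exact (ENNReal.cancel_of_ne hδE_ne_top).lt_tsub_iff_right.2 (by rwa [add_comm] at h1)
      have hstep_c : ENNReal.ofReal lam0 < (1 - δE) * S := by
        have h2 := (ENNReal.mul_lt_mul_iff_left hS0 hStop).2 hstep_b
        rwa [ENNReal.div_mul_cancel hS0 hStop] at h2
      refine ⟨S.toReal, ENNReal.toReal_pos hS0 hStop, ?_, ?_⟩
      · rw [ENNReal.ofReal_toReal hStop]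
      · have h3 : (1 - δE) ≠ ⊤ := (lt_of_le_of_lt tsub_le_self ENNReal.one_lt_top).ne
        have h4 := (ENNReal.toReal_lt_toReal hLne (ENNReal.mul_ne_top h3 hStop)).2 hstep_c
        rw [ENNReal.toReal_ofReal hlam0_nonneg, ENNReal.toReal_mul] at h4
        have h5 : (1 - δE).toReal = 1 - δ' := by
          rw [ENNReal.toReal_sub_of_le hδE_lt_one.le ENNReal.one_ne_top, ENNReal.toReal_one]
        rw [h5, mul_comm] at h4
        exact h4

  -- Step 5 : `min (ρ r) M` approaches `M`
  have habs : ∀ t : ℝ, ρ t = ρ |t| := by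
    intro t
    rcases abs_cases t with ⟨ht, -⟩ | ⟨ht, -⟩
    · rw [ht]
    · rw [ht, hρeven]
  have hρM : ∀ ε > (0:ℝ), ∃ r₀ ≥ (0:ℝ), ∀ r ≥ r₀, M - ε ≤ min (ρ r) M := by
    intro ε hε
    by_cases hcase : M - ε < 0
    · exact ⟨0, le_rfl, fun r hr => le_trans hcase.le (le_min (hρ0 r) hM0.le)⟩
    push_neg at hcase
    have h1 : ENNReal.ofReal (M - ε) < S :=
      lt_of_lt_of_le ((ENNReal.ofReal_lt_ofReal_iff_of_nonneg hcase).2 (by linarith)) hMS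
    rw [hSdef, lt_iSup_iff] at h1
    obtain ⟨t0, ht0⟩ := h1
    have ht0' : M - ε < ρ t0 := (ENNReal.ofReal_lt_ofReal_iff_of_nonneg hcase).1 ht0
    refine ⟨|t0|, abs_nonneg _, fun r hr => ?_⟩
    have hρr : ρ t0 ≤ ρ r := by
      rw [habs t0]
      exact hρmono (Set.mem_Ici.2 (abs_nonneg _)) (Set.mem_Ici.2 ((abs_nonneg t0).trans hr)) hr
    exact le_min (by linarith) (by linarith)
  -- Step 6 : the compact parameter set and a dense sequence in it
  set K : Set (EuclideanSpace ℝ (Fin p₂)) := {u | u ∈ B ∧ ‖u‖ = 1} with hKdef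
  have hu1 : ∀ β : EuclideanSpace ℝ (Fin p₂), β ∈ B → β ≠ 0 → (‖β‖⁻¹ • β) ∈ K := by
    intro β hβB hβ
    have hβn : (0:ℝ) < ‖β‖ := norm_pos_iff.2 hβ
    refine ⟨hBcone β hβB _ (inv_pos.2 hβn), ?_⟩
    rw [norm_smul, norm_inv, norm_norm]
    field_simp
  set C : Set (EuclideanSpace ℝ (Fin p₂) × EuclideanSpace ℝ (Fin p₁)) := K ×ˢ A with hCdef
  have hKcomp : IsCompact K := by
    refine Metric.isCompact_of_isClosed_isBounded ?_ ?_
    · have : K = B ∩ {u | ‖u‖ = 1} := rfl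
      rw [this]
      exact hBclosed.inter (isClosed_eq continuous_norm continuous_const)
    · refine Metric.isBounded_closedBall (x := (0 : EuclideanSpace ℝ (Fin p₂))) (r := 1) |>.subset ?_
      intro u hu
      rw [Metric.mem_closedBall, dist_zero_right, hu.2]
  have hCcomp : IsCompact C := hKcomp.prod hAcompact
  have hCne : C.Nonempty := ⟨(‖β1‖⁻¹ • β1, α₀), ⟨hu1 β1 hβ1B hβ1, hα₀⟩⟩
  have hCA : ∀ w ∈ C, w.2 ∈ A := fun w hw => hw.2
  haveI : Nonempty ↥C := hCne.to_subtype
  obtain ⟨dd, hdd⟩ := TopologicalSpace.exists_dense_seq ↥C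
  set d : ℕ → EuclideanSpace ℝ (Fin p₂) × EuclideanSpace ℝ (Fin p₁) := fun j => (dd j : _)
    with hddef
  have hdmem : ∀ j, d j ∈ C := fun j => (dd j).2
  have hdense : ∀ p ∈ C, ∀ r > (0:ℝ), ∃ j, dist (d j) p < r := by
    intro p hp r hr
    obtain ⟨j, hj⟩ := Metric.denseRange_iff.1 hdd ⟨p, hp⟩ r hr
    refine ⟨j, ?_⟩
    rw [dist_comm]
    rw [Subtype.dist_eq] at hj
    exact hj
  -- abbreviations
  have hdatameas : ∀ i, Measurable fun ω => (x i ω, e i ω) := fun i => (hx i).prodMk (he i)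
  -- Step 7 : the key expectation bound, by Fatou
  have hGmeasω : ∀ (k : ℕ) (z : EuclideanSpace ℝ (Fin p₂) × EuclideanSpace ℝ (Fin p₁)),
      Measurable fun ω => MEstAux.GA ρ M h β₀ α₀ d k z (x 0 ω, e 0 ω) := fun k z =>
    (MEstAux.GA_measurable hρc hh k z).comp (hdatameas 0)
  have hGint : ∀ (k : ℕ) (z : EuclideanSpace ℝ (Fin p₂) × EuclideanSpace ℝ (Fin p₁)),
      Integrable (fun ω => MEstAux.GA ρ M h β₀ α₀ d k z (x 0 ω, e 0 ω)) μ := by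
    intro k z
    refine Integrable.mono' (integrable_const M) (hGmeasω k z).aestronglyMeasurable
      (ae_of_all _ fun ω => ?_)
    rw [Real.norm_eq_abs, abs_of_nonneg (MEstAux.GA_nonneg hρ0 hM0.le _ _ _)]
    exact MEstAux.GA_le hρ0 hM0.le _ _ _
  have hkey : ∀ z ∈ C, ∃ k : ℕ, 1 ≤ k ∧
      lam0 < ∫ ω, MEstAux.GA ρ M h β₀ α₀ d k z (x 0 ω, e 0 ω) ∂μ := by
    intro z hz
    have hz1ne : z.1 ≠ 0 := by
      intro h0
      have h1 := hz.1.2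
      rw [h0, norm_zero] at h1
      exact one_ne_zero h1.symm
    have hminner : Measurable fun ω => ⟪z.1, h (x 0 ω) z.2⟫ :=
      (Continuous.inner continuous_const continuous_id).measurable.comp
        (hh.comp ((hx 0).prodMk measurable_const))
    have hset0 : MeasurableSet {ω | ⟪z.1, h (x 0 ω) z.2⟫ = 0} :=
      hminner (measurableSet_singleton 0)
    have hμ0 : μ {ω | ⟪z.1, h (x 0 ω) z.2⟫ = 0} ≤ δE := by
      calc μ {ω | ⟪z.1, h (x 0 ω) z.2⟫ = 0}
          ≤ ⨆ α ∈ A, μ {ω | ⟪z.1, h (x 0 ω) α⟫ = 0} :=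
            le_iSup₂ (f := fun α (_ : α ∈ A) => μ {ω | ⟪z.1, h (x 0 ω) α⟫ = 0}) z.2 hz.2
        _ ≤ ⨆ (_ : z.1 ≠ 0), ⨆ α ∈ A, μ {ω | ⟪z.1, h (x 0 ω) α⟫ = 0} :=
            le_iSup (fun _ : z.1 ≠ 0 => ⨆ α ∈ A, μ {ω | ⟪z.1, h (x 0 ω) α⟫ = 0}) hz1ne
        _ ≤ δE :=
            le_iSup (fun β => ⨆ (_ : β ≠ 0), ⨆ α ∈ A, μ {ω | ⟪β, h (x 0 ω) α⟫ = 0}) z.1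
    have hpt : ∀ᵐ ω ∂μ,
        ({ω' | ⟪z.1, h (x 0 ω') z.2⟫ = 0}ᶜ).indicator (fun _ => ENNReal.ofReal M) ω ≤
          Filter.liminf (fun k : ℕ =>
            ENNReal.ofReal (MEstAux.GA ρ M h β₀ α₀ d k z (x 0 ω, e 0 ω))) atTop := by
      filter_upwards [hDcont] with ω hcontω
      by_cases hwω : ⟪z.1, h (x 0 ω) z.2⟫ = 0
      · rw [Set.indicator_of_notMem (by simpa using hwω)]
        exact zero_le
      · rw [Set.indicator_of_mem (by simpa using hwω)]
        have htnd : Tendsto (fun n : ℕ => ENNReal.ofReal (M - 1/(n+1))) atTop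
            (nhds (ENNReal.ofReal M)) := by
          refine (ENNReal.continuous_ofReal.tendsto M).comp ?_
          have := (tendsto_const_nhds (α := ℕ) (f := atTop) (x := M)).sub
            tendsto_one_div_add_atTop_nhds_zero_nat
          simpa using this
        refine le_of_tendsto' htnd fun n => ?_
        have hε : (0:ℝ) < 1/(n+1) := by positivity
        have hge := MEstAux.GA_eventually_ge (M := M) (β₀ := β₀) (α₀ := α₀) (d := d) hρ0 hM0.le hρM hCA hdmem
          (hcontω 0) hz hwω (e 0 ω) hε
        refine Filter.le_liminf_of_le (by isBoundedDefault) ?_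
        filter_upwards [hge] with k hk
        exact ENNReal.ofReal_le_ofReal hk
    have hchain : ENNReal.ofReal lam0 < Filter.liminf (fun k : ℕ =>
        ∫⁻ ω, ENNReal.ofReal (MEstAux.GA ρ M h β₀ α₀ d k z (x 0 ω, e 0 ω)) ∂μ) atTop := by
      have e1 : ENNReal.ofReal (1 - δ') = 1 - δE := by
        rw [ENNReal.ofReal_sub _ hδ'0, ENNReal.ofReal_one, hδ'def,
          ENNReal.ofReal_toReal hδE_ne_top]
      calc ENNReal.ofReal lam0
          < ENNReal.ofReal (M * (1 - δ')) :=
            (ENNReal.ofReal_lt_ofReal_iff_of_nonneg hlam0_nonneg).2 hMlam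
        _ = ENNReal.ofReal M * (1 - δE) := by rw [ENNReal.ofReal_mul hM0.le, e1]
        _ ≤ ENNReal.ofReal M * μ ({ω | ⟪z.1, h (x 0 ω) z.2⟫ = 0}ᶜ) := by
            refine mul_le_mul_right ?_ _
            rw [prob_compl_eq_one_sub hset0]
            exact tsub_le_tsub_left hμ0 1
        _ = ∫⁻ ω, ({ω' | ⟪z.1, h (x 0 ω') z.2⟫ = 0}ᶜ).indicator
              (fun _ => ENNReal.ofReal M) ω ∂μ :=
            (lintegral_indicator_const hset0.compl _).symm
        _ ≤ ∫⁻ ω, Filter.liminf (fun k : ℕ =>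
              ENNReal.ofReal (MEstAux.GA ρ M h β₀ α₀ d k z (x 0 ω, e 0 ω))) atTop ∂μ :=
            lintegral_mono_ae hpt
        _ ≤ Filter.liminf (fun k : ℕ =>
              ∫⁻ ω, ENNReal.ofReal (MEstAux.GA ρ M h β₀ α₀ d k z (x 0 ω, e 0 ω)) ∂μ) atTop :=
            lintegral_liminf_le fun k => ENNReal.measurable_ofReal.comp (hGmeasω k z)
    by_contra hcon
    push_neg at hcon
    have hev' : ∀ᶠ k : ℕ in atTop,
        (∫⁻ ω, ENNReal.ofReal (MEstAux.GA ρ M h β₀ α₀ d k z (x 0 ω, e 0 ω)) ∂μ) ≤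
          ENNReal.ofReal lam0 := by
      filter_upwards [eventually_ge_atTop 1] with k hk
      rw [← ofReal_integral_eq_lintegral_ofReal (hGint k z)
        (ae_of_all _ fun ω => MEstAux.GA_nonneg hρ0 hM0.le _ _ _)]
      exact ENNReal.ofReal_le_ofReal (hcon k hk)
    exact absurd (Filter.liminf_le_of_frequently_le' hev'.frequently) hchain.not_ge
  -- Step 8 : strong laws of large numbers
  have hcomp_indep : ∀ (φ : (EuclideanSpace ℝ (Fin q) × ℝ) → ℝ), Measurable φ →
      Pairwise (Function.onFun (fun f g => IndepFun f g μ) fun i ω => φ (x i ω, e i ω)) := by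
    intro φ hφ i j hij
    exact (hiid.indepFun hij).comp hφ hφ
  have hcomp_ident : ∀ (φ : (EuclideanSpace ℝ (Fin q) × ℝ) → ℝ), Measurable φ → ∀ i,
      IdentDistrib (fun ω => φ (x i ω, e i ω)) (fun ω => φ (x 0 ω, e 0 ω)) μ μ := by
    intro φ hφ i
    exact (hident i).comp hφ
  have hsllnE : ∀ᵐ ω ∂μ, Tendsto (fun n : ℕ => (∑ i ∈ Finset.range n, ρ (e i ω)) / n)
      atTop (nhds lam0) := by
    have hφ : Measurable fun p : EuclideanSpace ℝ (Fin q) × ℝ => ρ p.2 :=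
      hρc.measurable.comp measurable_snd
    exact strong_law_ae_real (fun i ω => ρ (e i ω)) hint_ρe (hcomp_indep _ hφ) (hcomp_ident _ hφ)
  have hsllnG : ∀ (k : ℕ) (z : EuclideanSpace ℝ (Fin p₂) × EuclideanSpace ℝ (Fin p₁)),
      ∀ᵐ ω ∂μ, Tendsto
        (fun n : ℕ => (∑ i ∈ Finset.range n, MEstAux.GA ρ M h β₀ α₀ d k z (x i ω, e i ω)) / n)
        atTop (nhds (∫ ω, MEstAux.GA ρ M h β₀ α₀ d k z (x 0 ω, e 0 ω) ∂μ)) := by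
    intro k z
    have hφ := MEstAux.GA_measurable (M := M) (β₀ := β₀) (α₀ := α₀) (d := d) hρc hh k z
    have hint : Integrable (fun ω => MEstAux.GA ρ M h β₀ α₀ d k z (x 0 ω, e 0 ω)) μ := by
      refine Integrable.mono' (integrable_const M) ((hφ.comp (hdatameas 0)).aestronglyMeasurable)
        (ae_of_all _ fun ω => ?_)
      rw [Real.norm_eq_abs, abs_of_nonneg (MEstAux.GA_nonneg hρ0 hM0.le _ _ _)]
      exact MEstAux.GA_le hρ0 hM0.le _ _ _
    exact strong_law_ae_real _ hint (hcomp_indep _ hφ) (hcomp_ident _ hφ)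
  -- Step 9 : finite subcover
  choose kz hkz1 hkzgt using fun z : ↥C => hkey z z.2
  have hcov : C ⊆ ⋃ z : ↥C, Metric.ball (z : EuclideanSpace ℝ (Fin p₂) ×
      EuclideanSpace ℝ (Fin p₁)) ((kz z : ℝ))⁻¹ := by
    intro p hp
    refine Set.mem_iUnion.2 ⟨⟨p, hp⟩, Metric.mem_ball_self ?_⟩
    have : (0:ℝ) < (kz ⟨p, hp⟩ : ℝ) := by exact_mod_cast hkz1 ⟨p, hp⟩
    positivity
  obtain ⟨t, ht⟩ := hCcomp.elim_finite_subcover _ (fun z : ↥C => Metric.isOpen_ball) hcov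
  refine ⟨((t.sup kz : ℕ) : ℝ), ?_⟩
  -- Step 10 : conclusion
  have hE2 : ∀ᵐ ω ∂μ, ∀ z ∈ t, Tendsto
      (fun n : ℕ => (∑ i ∈ Finset.range n,
        MEstAux.GA ρ M h β₀ α₀ d (kz z) (z : EuclideanSpace ℝ (Fin p₂) ×
          EuclideanSpace ℝ (Fin p₁)) (x i ω, e i ω)) / n)
      atTop (nhds (∫ ω, MEstAux.GA ρ M h β₀ α₀ d (kz z) (z : EuclideanSpace ℝ (Fin p₂) ×
          EuclideanSpace ℝ (Fin p₁)) (x 0 ω, e 0 ω) ∂μ)) := by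
    exact (MeasureTheory.ae_ball_iff t.countable_toSet).2 fun z _ => hsllnG (kz z) z
  filter_upwards [hsllnE, hE2, hDcont] with ω hω1 hω2 hω3
  have hev : ∀ᶠ n : ℕ in atTop, ∀ z ∈ t,
      (∑ i ∈ Finset.range n, ρ (e i ω)) / n <
        (∑ i ∈ Finset.range n, MEstAux.GA ρ M h β₀ α₀ d (kz z)
          (z : EuclideanSpace ℝ (Fin p₂) × EuclideanSpace ℝ (Fin p₁)) (x i ω, e i ω)) / n := by
    rw [Filter.eventually_all_finset]
    intro z hz
    exact hω1.eventually_lt (hω2 z hz) (hkzgt z)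
  filter_upwards [hev, eventually_ge_atTop 1] with n hn hn1
  by_contra hgt
  push_neg at hgt
  have hβpos : (0:ℝ) < ‖βhat n ω‖ := lt_of_le_of_lt (Nat.cast_nonneg _) hgt
  have hβne : βhat n ω ≠ 0 := norm_pos_iff.1 hβpos
  have hpC : (‖βhat n ω‖⁻¹ • βhat n ω, αhat n ω) ∈ C :=
    ⟨hu1 _ (hβhatmem n ω) hβne, hαhatmem n ω⟩
  obtain ⟨z, hzt, hzball⟩ := Set.mem_iUnion₂.1 (ht hpC)
  have hsk : ((kz z : ℕ) : ℝ) ≤ ‖βhat n ω‖ := by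
    have hkle : ((kz z : ℕ) : ℝ) ≤ ((t.sup kz : ℕ) : ℝ) := Nat.cast_le.2 (Finset.le_sup hzt)
    linarith
  have hper : ∀ i : ℕ, MEstAux.GA ρ M h β₀ α₀ d (kz z)
      (z : EuclideanSpace ℝ (Fin p₂) × EuclideanSpace ℝ (Fin p₁)) (x i ω, e i ω) ≤
      ρ (y i ω - ⟪βhat n ω, h (x i ω) (αhat n ω)⟫) := by
    intro i
    have h1 := MEstAux.GA_le_fA (M := M) (β₀ := β₀) (α₀ := α₀) (d := d) hρc hρ0 hM0.le
      hCA hdmem hdense (hω3 i) (kz z) hpC (Metric.mem_ball.1 hzball) (e i ω)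
    have h2 := MEstAux.fA_le_rho (M := M) (h := h) (β₀ := β₀) (α₀ := α₀) hρeven hρmono
      (kz z) (αhat n ω) hβne hsk (x i ω) (e i ω)
    rw [hy i ω]
    exact le_trans h1 h2
  have hnpos : (0:ℝ) < n := by exact_mod_cast hn1
  have hsum : (∑ i ∈ Finset.range n, MEstAux.GA ρ M h β₀ α₀ d (kz z)
      (z : EuclideanSpace ℝ (Fin p₂) × EuclideanSpace ℝ (Fin p₁)) (x i ω, e i ω)) / n ≤
      (∑ i ∈ Finset.range n, ρ (y i ω - ⟪βhat n ω, h (x i ω) (αhat n ω)⟫)) / n := by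
    refine (div_le_div_iff_of_pos_right hnpos).2 (Finset.sum_le_sum fun i _ => hper i)
  have harg := hargmin n ω α₀ hα₀ β₀ hβ₀
  simp only [hye] at harg
  have hdiv : ∀ a : ℝ, (1/(n:ℝ)) * a = a / n := fun a => by ring
  rw [hdiv, hdiv] at harg
  have hlt := hn z hzt
  linarith
end

section
/- Let ρ be a ρ-function, let e be a real random variable such that the function m(t) = E ρ(e − t) is finite for all t and has a unique minimum at t = 0, with λ₀ = Eρ(e). Let x be a random element independent of e, let y = β₀ᵀ h(x, α₀) + e, and define λ(α, β) = E ρ(y − βᵀ h(x, α)) (assumed finite). Then for any (α, β) such that P{βᵀ h(x, α) ≠ β₀ᵀ h(x, α₀)} > 0, one has λ(α, β) > λ₀ = λ(α₀, β₀). In particular, λ(α, β) attains its minimum over all (α, β) only when βᵀ h(x, α) = β₀ᵀ h(x, α₀) almost surely. -/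
open MeasureTheory ProbabilityTheory
open scoped RealInnerProductSpace

/-- Let `ρ` be a ρ-function and `e` a real random variable
such that `t ↦ E ρ(e − t)` is finite for all `t` and has a unique minimum at
`t = 0`, with `λ₀ = E ρ(e)`.  Let `x` be independent of `e`, let
`y = β₀ᵀ h(x, α₀) + e` and `λ(α, β) = E ρ(y − βᵀ h(x, α))` (assumed finite).
Then whenever `P{βᵀh(x,α) ≠ β₀ᵀh(x,α₀)} > 0` one has `λ(α,β) > λ₀ = λ(α₀,β₀)`;
in particular `λ` attains its minimum only when `βᵀh(x,α) = β₀ᵀh(x,α₀)` a.s. -/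
theorem expected_loss_strict_min_separable
    {Ω : Type*} [MeasurableSpace Ω] (μ : Measure Ω) [IsProbabilityMeasure μ]
    (q p₁ p₂ : ℕ)
    (ρ : ℝ → ℝ) (hρ : IsRhoFunction ρ)
    (e : Ω → ℝ) (he : Measurable e)
    (x : Ω → EuclideanSpace ℝ (Fin q)) (hx : Measurable x)
    (hxe : IndepFun x e μ)
    (h : EuclideanSpace ℝ (Fin q) → EuclideanSpace ℝ (Fin p₁) →
      EuclideanSpace ℝ (Fin p₂))
    (hh : Measurable (Function.uncurry h))
    (α₀ : EuclideanSpace ℝ (Fin p₁)) (β₀ : EuclideanSpace ℝ (Fin p₂))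
    (y : Ω → ℝ) (hy : ∀ ω, y ω = ⟪β₀, h (x ω) α₀⟫ + e ω)
    (hmfin : ∀ t : ℝ, Integrable (fun ω => ρ (e ω - t)) μ)
    (hmmin : ∀ t : ℝ, t ≠ 0 → ∫ ω, ρ (e ω) ∂μ < ∫ ω, ρ (e ω - t) ∂μ) :
    ∀ (α : EuclideanSpace ℝ (Fin p₁)) (β : EuclideanSpace ℝ (Fin p₂)),
      Integrable (fun ω => ρ (y ω - ⟪β, h (x ω) α⟫)) μ →
        (0 < μ {ω | ⟪β, h (x ω) α⟫ ≠ ⟪β₀, h (x ω) α₀⟫} →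
          ∫ ω, ρ (e ω) ∂μ < ∫ ω, ρ (y ω - ⟪β, h (x ω) α⟫) ∂μ) ∧
        ((∫ ω, ρ (y ω - ⟪β, h (x ω) α⟫) ∂μ ≤ ∫ ω, ρ (e ω) ∂μ) →
          ∀ᵐ ω ∂μ, ⟪β, h (x ω) α⟫ = ⟪β₀, h (x ω) α₀⟫) := by
  obtain ⟨hρc, hρnn, -, hρ0, -, -⟩ := hρ
  intro α β hint
  -- the discrepancy function
  set g : EuclideanSpace ℝ (Fin q) → ℝ :=
    fun v => ⟪β, h v α⟫ - ⟪β₀, h v α₀⟫ with hgdef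
  have hmeas_h : ∀ γ : EuclideanSpace ℝ (Fin p₁), Measurable (fun v => h v γ) := fun γ =>
    hh.comp (measurable_id.prodMk measurable_const)
  have hinner : ∀ (b : EuclideanSpace ℝ (Fin p₂)) (γ : EuclideanSpace ℝ (Fin p₁)),
      Measurable (fun v => ⟪b, h v γ⟫) := fun b γ =>
    ((continuous_const.inner continuous_id).measurable).comp (hmeas_h γ)
  have hgmeas : Measurable g := (hinner β α).sub (hinner β₀ α₀)
  have hpt : ∀ ω, y ω - ⟪β, h (x ω) α⟫ = e ω - g (x ω) := by
    intro ω; rw [hy]; simp only [hgdef]; ring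
  set ν : Measure (EuclideanSpace ℝ (Fin q)) := μ.map x with hνdef
  set κ : Measure ℝ := μ.map e with hκdef
  haveI : IsProbabilityMeasure ν := Measure.isProbabilityMeasure_map hx.aemeasurable
  haveI : IsProbabilityMeasure κ := Measure.isProbabilityMeasure_map he.aemeasurable
  set F : EuclideanSpace ℝ (Fin q) × ℝ → ℝ := fun p => ρ (p.2 - g p.1) with hFdef
  have hFmeas : Measurable F :=
    hρc.measurable.comp (measurable_snd.sub (hgmeas.comp measurable_fst))
  have hpair : μ.map (fun ω => (x ω, e ω)) = ν.prod κ :=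
    (indepFun_iff_map_prod_eq_prod_map_map hx.aemeasurable he.aemeasurable).1 hxe
  have hint' : Integrable (fun ω => F (x ω, e ω)) μ := by
    have : (fun ω => F (x ω, e ω)) = fun ω => ρ (y ω - ⟪β, h (x ω) α⟫) := by
      funext ω; simp only [hFdef, hpt ω]
    rw [this]; exact hint
  have hFint : Integrable F (ν.prod κ) := by
    rw [← hpair]
    exact (integrable_map_measure
      (by rw [hpair]; exact hFmeas.aestronglyMeasurable)
      (hx.prodMk he).aemeasurable).2 hint'
  -- the inner integral
  set M : EuclideanSpace ℝ (Fin q) → ℝ := fun v => ∫ s, F (v, s) ∂κ with hMdef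
  have hMint : Integrable M ν := hFint.integral_prod_left
  have hM_eq : ∀ v, M v = ∫ ω, ρ (e ω - g v) ∂μ := by
    intro v
    simp only [hMdef, hκdef, hFdef]
    exact integral_map he.aemeasurable
      ((hρc.comp (continuous_id.sub continuous_const)).aestronglyMeasurable)
  -- main identity: λ(α,β) = ∫ M dν
  have hmain : ∫ ω, ρ (y ω - ⟪β, h (x ω) α⟫) ∂μ = ∫ v, M v ∂ν := by
    have h1 : ∫ ω, ρ (y ω - ⟪β, h (x ω) α⟫) ∂μ = ∫ ω, F (x ω, e ω) ∂μ := by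
      congr 1; funext ω; simp only [hFdef, hpt ω]
    rw [h1, ← integral_map (hx.prodMk he).aemeasurable
      hFmeas.aestronglyMeasurable, hpair, integral_prod F hFint]
  set lam0 : ℝ := ∫ ω, ρ (e ω) ∂μ with hlam0
  have hMlb : ∀ v, lam0 ≤ M v := by
    intro v
    rw [hM_eq v]
    rcases eq_or_ne (g v) 0 with h0 | h0
    · rw [h0]; simp [hlam0]
    · exact (hmmin _ h0).le
  have hMstrict : ∀ v, g v ≠ 0 → lam0 < M v := by
    intro v h0; rw [hM_eq v]; exact hmmin _ h0
  have hsetS : {ω | ⟪β, h (x ω) α⟫ ≠ ⟪β₀, h (x ω) α₀⟫} = x ⁻¹' {v | g v ≠ 0} := by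
    ext ω; simp [hgdef, sub_eq_zero]
  have hSmeas : MeasurableSet {v | g v ≠ 0} :=
    (hgmeas (measurableSet_singleton 0)).compl
  have hνS : μ {ω | ⟪β, h (x ω) α⟫ ≠ ⟪β₀, h (x ω) α₀⟫} = ν {v | g v ≠ 0} := by
    rw [hsetS, hνdef, Measure.map_apply hx hSmeas]
  -- the key strict inequality
  have key : 0 < μ {ω | ⟪β, h (x ω) α⟫ ≠ ⟪β₀, h (x ω) α₀⟫} →
      lam0 < ∫ ω, ρ (y ω - ⟪β, h (x ω) α⟫) ∂μ := by
    intro hpos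
    rw [hνS] at hpos
    rw [hmain]
    by_contra hle
    push_neg at hle
    have h0 : ∫ v, (M v - lam0) ∂ν = 0 := by
      have hnn : 0 ≤ ∫ v, (M v - lam0) ∂ν :=
        integral_nonneg fun v => sub_nonneg.2 (hMlb v)
      have : ∫ v, (M v - lam0) ∂ν ≤ 0 := by
        rw [integral_sub hMint (integrable_const lam0), integral_const]
        simp only [measure_univ, probReal_univ, ENNReal.toReal_one, one_smul]
        linarith
      linarith
    have hae : ∀ᵐ v ∂ν, M v - lam0 = 0 := by
      have := (integral_eq_zero_iff_of_nonneg
        (fun v => sub_nonneg.2 (hMlb v)) (hMint.sub (integrable_const lam0))).1 h0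
      filter_upwards [this] with v hv using hv
    have hsub : {v | g v ≠ 0} ⊆ {v | M v - lam0 ≠ 0} := by
      intro v hv
      exact sub_ne_zero.2 (ne_of_gt (hMstrict v hv))
    have : ν {v | g v ≠ 0} = 0 :=
      le_antisymm (le_trans (measure_mono hsub) (le_of_eq (ae_iff.1 hae))) zero_le
    exact absurd this (ne_of_gt hpos)
  refine ⟨key, fun hle => ?_⟩
  have h0 : μ {ω | ⟪β, h (x ω) α⟫ ≠ ⟪β₀, h (x ω) α₀⟫} = 0 := by
    by_contra hne
    exact absurd hle (not_le.2 (key (pos_iff_ne_zero.2 hne)))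
  exact ae_iff.2 h0
end

section
/- Let ρ be a ρ-function that is not identically zero, and let e be a real random variable whose distribution has an even density f(u) that is nonincreasing for u ≥ 0 and strictly decreasing in a neighborhood of u = 0. Assume E ρ(e − t) is finite for every t ∈ ℝ. Then the function t ↦ E ρ(e − t) has a unique minimum at t = 0. -/
open MeasureTheory

/-- Core real-integral lemma: for `t > 0`,
`∫ ρ(u) f(u) du < ∫ ρ(u - t) f(u) du`. -/
lemma core_real_rho_lemma (ρ f : ℝ → ℝ) (hρ : IsRhoFunction ρ)
    (hρne : ∃ u, ρ u ≠ 0)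
    (hf0 : ∀ u, 0 ≤ f u) (hfeven : ∀ u, f (-u) = f u)
    (hfmono : AntitoneOn f (Set.Ici 0))
    (hfstrict : ∃ ε > (0 : ℝ), StrictAntiOn f (Set.Icc 0 ε))
    (hA : ∀ s : ℝ, Integrable (fun u => ρ (u - s) * f u) volume)
    (t : ℝ) (ht : 0 < t) :
    ∫ u, ρ u * f u < ∫ u, ρ (u - t) * f u := by
  obtain ⟨hc, hnn, heven, h0, hmono, hstr⟩ := hρ
  obtain ⟨ε, hε0, hfsa⟩ := hfstrict
  -- evenness in |·| form
  have rabs : ∀ x : ℝ, ρ x = ρ |x| := by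
    intro x
    rcases le_or_gt 0 x with h | h
    · rw [abs_of_nonneg h]
    · rw [abs_of_neg h]; exact (heven x).symm
  have fabs : ∀ x : ℝ, f x = f |x| := by
    intro x
    rcases le_or_gt 0 x with h | h
    · rw [abs_of_nonneg h]
    · rw [abs_of_neg h]; exact (hfeven x).symm
  set s : ℝ := t / 2 with hs
  have hs0 : 0 < s := by positivity
  have hts : t = 2 * s := by rw [hs]; ring
  set F1 : ℝ → ℝ := fun w => ρ (w - s) * f (w + s) with hF1
  set F2 : ℝ → ℝ := fun w => ρ (w + s) * f (w - s) with hF2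
  set F3 : ℝ → ℝ := fun w => ρ (w - s) * f (w - s) with hF3
  set F4 : ℝ → ℝ := fun w => ρ (w + s) * f (w + s) with hF4
  -- F1 is translate of u ↦ ρ(u-t) f(u)
  have hF1eq : F1 = fun w => ρ (w + s - t) * f (w + s) := by
    funext w; simp only [hF1]; congr 2; rw [hts]; ring
  have hF2eq : ∀ w, F1 (-w) = F2 w := by
    intro w
    simp only [hF1, hF2]
    rw [show -w - s = -(w + s) by ring, show -w + s = -(w - s) by ring,
      heven, hfeven]
  have hF3eq : F3 = fun w => ρ (w + -s - 0) * f (w + -s) := by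
    funext w; simp only [hF3]; congr 2 <;> ring
  have hF4eq : F4 = fun w => ρ (w + s - 0) * f (w + s) := by
    funext w; simp only [hF4]; congr 2; ring
  -- integrability
  have hI1 : Integrable F1 volume := by
    rw [hF1eq]; exact (hA t).comp_add_right s
  have hI2 : Integrable F2 volume := by
    have := hI1.comp_neg
    simpa only [hF2eq] using this
  have hI3 : Integrable F3 volume := by
    rw [hF3eq]; exact (hA 0).comp_add_right (-s)
  have hI4 : Integrable F4 volume := by
    rw [hF4eq]; exact (hA 0).comp_add_right s
  -- integral identities
  have e1 : ∫ w, F1 w = ∫ u, ρ (u - t) * f u := by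
    rw [hF1eq]
    exact integral_add_right_eq_self (fun u => ρ (u - t) * f u) s
  have e2 : ∫ w, F2 w = ∫ w, F1 w := by
    rw [← integral_neg_eq_self F1 volume]
    exact integral_congr_ae (Filter.Eventually.of_forall fun w => (hF2eq w).symm)
  have e3 : ∫ w, F3 w = ∫ u, ρ u * f u := by
    rw [hF3eq]
    have := integral_add_right_eq_self (μ := volume) (fun u => ρ (u - 0) * f u) (-s)
    simpa only [sub_zero] using this
  have e4 : ∫ w, F4 w = ∫ u, ρ u * f u := by
    rw [hF4eq]
    have := integral_add_right_eq_self (μ := volume) (fun u => ρ (u - 0) * f u) s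
    simpa only [sub_zero] using this
  -- the symmetrized integrand
  set G : ℝ → ℝ := fun w => (ρ (w + s) - ρ (w - s)) * (f (w - s) - f (w + s))
    with hG
  have hGexp : ∀ w, G w = F2 w + F1 w - F3 w - F4 w := by
    intro w; simp only [hG, hF1, hF2, hF3, hF4]; ring
  have hGint : Integrable G volume := by
    have : Integrable (fun w => F2 w + F1 w - F3 w - F4 w) volume :=
      ((hI2.add hI1).sub hI3).sub hI4
    exact this.congr (Filter.Eventually.of_forall fun w => (hGexp w).symm)
  have hGnn : ∀ w, 0 ≤ G w := by
    intro w
    have h1 : ρ (w - s) = ρ |w - s| := rabs _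
    have h2 : ρ (w + s) = ρ |w + s| := rabs _
    have h3 : f (w - s) = f |w - s| := fabs _
    have h4 : f (w + s) = f |w + s| := fabs _
    simp only [hG]
    rcases le_total |w - s| |w + s| with h | h
    · have hr : ρ |w - s| ≤ ρ |w + s| :=
        hmono (Set.mem_Ici.mpr (abs_nonneg _)) (Set.mem_Ici.mpr (abs_nonneg _)) h
      have hfle : f |w + s| ≤ f |w - s| :=
        hfmono (Set.mem_Ici.mpr (abs_nonneg _)) (Set.mem_Ici.mpr (abs_nonneg _)) h
      rw [h1, h2, h3, h4]
      exact mul_nonneg (by linarith) (by linarith)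
    · have hr : ρ |w + s| ≤ ρ |w - s| :=
        hmono (Set.mem_Ici.mpr (abs_nonneg _)) (Set.mem_Ici.mpr (abs_nonneg _)) h
      have hfle : f |w - s| ≤ f |w + s| :=
        hfmono (Set.mem_Ici.mpr (abs_nonneg _)) (Set.mem_Ici.mpr (abs_nonneg _)) h
      rw [h1, h2, h3, h4]
      nlinarith [hr, hfle]
  have eG : ∫ w, G w = 2 * (∫ u, ρ (u - t) * f u) - 2 * (∫ u, ρ u * f u) := by
    have : ∫ w, G w = ∫ w, (F2 w + F1 w - F3 w - F4 w) :=
      integral_congr_ae (Filter.Eventually.of_forall hGexp)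
    have h12 : Integrable (fun w => F2 w + F1 w) volume := hI2.add hI1
    have h123 : Integrable (fun w => F2 w + F1 w - F3 w) volume := h12.sub hI3
    rw [this, integral_sub h123 hI4, integral_sub h12 hI3,
      integral_add hI2 hI1, e2, e1, e3, e4]
    ring
  -- strict positivity of ∫ G
  obtain ⟨u₀, hu₀⟩ := hρne
  have hρu₀ : 0 < ρ u₀ := lt_of_le_of_ne (hnn u₀) (Ne.symm hu₀)
  have hev : ∀ᶠ x in nhds (0 : ℝ), ρ x < ρ u₀ := by
    have hcont : ContinuousAt ρ 0 := hc.continuousAt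
    have : Set.Iio (ρ u₀) ∈ nhds (ρ 0) := by
      rw [h0]; exact Iio_mem_nhds hρu₀
    exact hcont this
  obtain ⟨η, hη0, hη⟩ := Metric.eventually_nhds_iff.mp hev
  set δ : ℝ := min (min ε η) t with hδ
  have hδ0 : 0 < δ := lt_min (lt_min hε0 hη0) ht
  have hδε : δ ≤ ε := le_trans (min_le_left _ _) (min_le_left _ _)
  have hδη : δ ≤ η := le_trans (min_le_left _ _) (min_le_right _ _)
  have hδt : δ ≤ t := min_le_right _ _
  set a₂ : ℝ := 2 * δ / 3 with ha₂
  set b₁ : ℝ := t + δ / 3 with hb₁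
  have ha₂0 : 0 ≤ a₂ := by positivity
  have hb₁0 : 0 ≤ b₁ := by positivity
  have ha₂ε : a₂ < ε := by rw [ha₂]; linarith
  have ha₂η : a₂ < η := by rw [ha₂]; linarith
  have ha₂b₁ : a₂ < b₁ := by rw [ha₂, hb₁]; linarith
  have hρ21 : ρ a₂ < ρ b₁ := by
    apply hstr a₂ b₁ ha₂0 ha₂b₁
    refine ⟨u₀, hη ?_⟩
    rw [Real.dist_eq, sub_zero, abs_of_nonneg ha₂0]
    exact ha₂η
  have hf21 : f b₁ < f a₂ := by
    rcases le_or_gt b₁ ε with h | h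
    · exact hfsa ⟨ha₂0, le_of_lt ha₂ε⟩ ⟨hb₁0, h⟩ ha₂b₁
    · calc f b₁ ≤ f ε := hfmono (Set.mem_Ici.mpr (le_of_lt hε0))
            (Set.mem_Ici.mpr hb₁0) (le_of_lt h)
        _ < f a₂ := hfsa ⟨ha₂0, le_of_lt ha₂ε⟩ ⟨le_of_lt hε0, le_refl _⟩ ha₂ε
  set c : ℝ := (ρ b₁ - ρ a₂) * (f a₂ - f b₁) with hcdef
  have hc0 : 0 < c := mul_pos (by linarith) (by linarith)
  set w₁ : ℝ := s + δ / 3 with hw₁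
  set w₂ : ℝ := s + 2 * δ / 3 with hw₂
  have hw12 : w₁ < w₂ := by rw [hw₁, hw₂]; linarith
  have hlower : ∀ w ∈ Set.Icc w₁ w₂, c ≤ G w := by
    intro w hw
    obtain ⟨hwl, hwr⟩ := hw
    have haw0 : 0 ≤ w - s := by rw [hw₁] at hwl; linarith
    have haw : w - s ≤ a₂ := by rw [hw₂] at hwr; rw [ha₂]; linarith
    have hbw : b₁ ≤ w + s := by rw [hw₁] at hwl; rw [hb₁, hts]; linarith
    have hbw0 : 0 ≤ w + s := le_trans hb₁0 hbw
    have h1 : ρ (w - s) ≤ ρ a₂ := hmono haw0 ha₂0 haw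
    have h2 : ρ b₁ ≤ ρ (w + s) := hmono hb₁0 hbw0 hbw
    have h3 : f a₂ ≤ f (w - s) := hfmono haw0 ha₂0 haw
    have h4 : f (w + s) ≤ f b₁ := hfmono hb₁0 hbw0 hbw
    simp only [hG]
    rw [hcdef]
    apply mul_le_mul (by linarith) (by linarith) (by linarith) (by linarith)
  have hIcc : (volume (Set.Icc w₁ w₂)).toReal = w₂ - w₁ := by
    rw [Real.volume_Icc, ENNReal.toReal_ofReal (by linarith)]
  have hset : c * (w₂ - w₁) ≤ ∫ w in Set.Icc w₁ w₂, G w := by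
    rw [← hIcc]
    exact setIntegral_ge_of_const_le_real measurableSet_Icc
      (by rw [Real.volume_Icc]; exact ENNReal.ofReal_ne_top)
      hlower hGint.integrableOn
  have hle : ∫ w in Set.Icc w₁ w₂, G w ≤ ∫ w, G w :=
    setIntegral_le_integral hGint (Filter.Eventually.of_forall hGnn)
  have hpos : 0 < ∫ w, G w := by
    have h1 : 0 < c * (w₂ - w₁) := mul_pos hc0 (by linarith)
    linarith
  rw [eG] at hpos
  linarith

/-- **Lemma 3.1 of Yohai, 1987.** Let `ρ` be a ρ-function that
is not identically zero, and let `e` be a real random variable whose law has an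
even density `f` that is nonincreasing for `u ≥ 0` and strictly decreasing in a
neighborhood of `0`. If `E ρ(e − t)` is finite for every `t`, then
`t ↦ E ρ(e − t)` has a unique minimum at `t = 0`. -/
theorem symmetric_unimodal_expected_loss_unique_min
    {Ω : Type*} [MeasurableSpace Ω] (μ : Measure Ω) [IsProbabilityMeasure μ]
    (ρ : ℝ → ℝ) (hρ : IsRhoFunction ρ) (hρne : ∃ u, ρ u ≠ 0)
    (e : Ω → ℝ) (he : Measurable e)
    (f : ℝ → ℝ) (hf : Measurable f) (hf0 : ∀ u, 0 ≤ f u)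
    (hfeven : ∀ u, f (-u) = f u)
    (hfmono : AntitoneOn f (Set.Ici 0))
    (hfstrict : ∃ ε > (0 : ℝ), StrictAntiOn f (Set.Icc 0 ε))
    (hdens : Measure.map e μ =
      MeasureTheory.volume.withDensity (fun u => ENNReal.ofReal (f u)))
    (hint : ∀ t : ℝ, Integrable (fun ω => ρ (e ω - t)) μ) :
    ∀ t : ℝ, t ≠ 0 → ∫ ω, ρ (e ω) ∂μ < ∫ ω, ρ (e ω - t) ∂μ := by
  obtain ⟨hc, hnn, heven, h0, hmono, hstr⟩ := hρ
  have hcs : ∀ s : ℝ, Continuous (fun x : ℝ => ρ (x - s)) :=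
    fun s => hc.comp (continuous_id.sub continuous_const)
  -- transfer expectation to a real integral against the density
  have transfer : ∀ s : ℝ, ∫ ω, ρ (e ω - s) ∂μ = ∫ u, ρ (u - s) * f u := by
    intro s
    have h1 : ∫ ω, ρ (e ω - s) ∂μ = ∫ x, ρ (x - s) ∂(Measure.map e μ) :=
      (integral_map he.aemeasurable ((hcs s).aestronglyMeasurable)).symm
    rw [h1, hdens]
    have hden : (fun u : ℝ => ENNReal.ofReal (f u)) =
        fun u : ℝ => ((f u).toNNReal : ENNReal) := rfl
    rw [hden, integral_withDensity_eq_integral_smul hf.real_toNNReal]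
    apply integral_congr_ae
    filter_upwards with x
    rw [NNReal.smul_def, smul_eq_mul, Real.coe_toNNReal _ (hf0 x), mul_comm]
  -- transfer integrability
  have hA : ∀ s : ℝ, Integrable (fun u => ρ (u - s) * f u) volume := by
    intro s
    have h1 : Integrable (fun x => ρ (x - s)) (Measure.map e μ) := by
      rw [integrable_map_measure ((hcs s).aestronglyMeasurable) he.aemeasurable]
      exact (hint s).congr (Filter.Eventually.of_forall fun ω => rfl)
    rw [hdens] at h1
    rw [integrable_withDensity_iff hf.ennreal_ofReal
      (Filter.Eventually.of_forall fun x => ENNReal.ofReal_lt_top)] at h1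
    apply h1.congr
    filter_upwards with x
    rw [ENNReal.toReal_ofReal (hf0 x)]
  -- symmetry of the objective
  have hsym : ∀ s : ℝ, ∫ u, ρ (u - s) * f u = ∫ u, ρ (u + s) * f u := by
    intro s
    rw [← integral_neg_eq_self (fun u => ρ (u - s) * f u) volume]
    apply integral_congr_ae
    filter_upwards with x
    rw [show -x - s = -(x + s) by ring, heven, hfeven]
  have hzero : ∫ ω, ρ (e ω) ∂μ = ∫ u, ρ u * f u := by
    have := transfer 0
    simp only [sub_zero] at this
    exact this
  intro t ht
  rw [hzero, transfer t]
  rcases lt_or_gt_of_ne ht with h | h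
  · -- t < 0
    have h1 : ∫ u, ρ (u - t) * f u = ∫ u, ρ (u - (-t)) * f u := by
      rw [hsym t]
      apply integral_congr_ae
      filter_upwards with x
      rw [sub_neg_eq_add]
    rw [h1]
    exact core_real_rho_lemma ρ f ⟨hc, hnn, heven, h0, hmono, hstr⟩ hρne hf0
      hfeven hfmono hfstrict hA (-t) (by linarith)
  · exact core_real_rho_lemma ρ f ⟨hc, hnn, heven, h0, hmono, hstr⟩ hρne hf0
      hfeven hfmono hfstrict hA t h
end
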